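/- For any A ∈ M_n(ℂ), the normalized numerical range F_N(A) equals the image of DW(A) ∩ {v : v_3 > 0} under the map h(v) = v_3^{-1/2}(v_1 + i v_2). -/

import Mathlib

open Matrix

noncomputable def fN {n : ℕ} (A : Matrix (Fin n) (Fin n) ℂ)
    (x : EuclideanSpace ℂ (Fin n)) : ℂ :=
  (inner ℂ x (Matrix.toEuclideanLin A x) : ℂ) /
    ((‖x‖ * ‖Matrix.toEuclideanLin A x‖ : ℝ) : ℂ)

noncomputable def FN {n : ℕ} (A : Matrix (Fin n) (Fin n) ℂ) : Set ℂ :=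
  {z | ∃ x : EuclideanSpace ℂ (Fin n), Matrix.toEuclideanLin A x ≠ 0 ∧ z = fN A x}

noncomputable def DW {n : ℕ} (A : Matrix (Fin n) (Fin n) ℂ) : Set (ℝ × ℝ × ℝ) :=
  {v | ∃ x : EuclideanSpace ℂ (Fin n), ‖x‖ = 1 ∧
    v = ((inner ℂ x (Matrix.toEuclideanLin A x) : ℂ).re,
         (inner ℂ x (Matrix.toEuclideanLin A x) : ℂ).im,
         ‖Matrix.toEuclideanLin A x‖ ^ 2)}

noncomputable def hmap (v : ℝ × ℝ × ℝ) : ℂ :=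
  ((v.1 : ℂ) + (v.2.1 : ℂ) * Complex.I) / ((Real.sqrt v.2.2 : ℝ) : ℂ)

lemma fN_smul {n : ℕ} (A : Matrix (Fin n) (Fin n) ℂ) (x : EuclideanSpace ℂ (Fin n))
    (c : ℝ) (hc : 0 < c) : fN A ((c : ℂ) • x) = fN A x := by
  have hL : Matrix.toEuclideanLin A ((c : ℂ) • x)
      = (c : ℂ) • Matrix.toEuclideanLin A x := map_smul _ _ _
  simp only [fN, hL, inner_smul_left, inner_smul_right, norm_smul, Complex.norm_real,
    Real.norm_eq_abs, RingHom.map_mul, Complex.conj_ofReal]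
  rw [abs_of_pos hc]
  have h1 : ((c : ℂ) * ((c : ℂ) * (inner ℂ x (Matrix.toEuclideanLin A x) : ℂ)))
      = ((c : ℂ) * c) * (inner ℂ x (Matrix.toEuclideanLin A x) : ℂ) := by ring
  have h2 : (((c * ‖x‖) * (c * ‖Matrix.toEuclideanLin A x‖) : ℝ) : ℂ)
      = ((c : ℂ) * c) * ((‖x‖ * ‖Matrix.toEuclideanLin A x‖ : ℝ) : ℂ) := by
    push_cast; ring
  rw [h1, h2, mul_div_mul_left]
  simp only [ne_eq, mul_self_eq_zero, Complex.ofReal_eq_zero]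
  exact hc.ne'

lemma fN_eq_hmap {n : ℕ} (A : Matrix (Fin n) (Fin n) ℂ) (x : EuclideanSpace ℂ (Fin n))
    (hx : ‖x‖ = 1) :
    hmap ((inner ℂ x (Matrix.toEuclideanLin A x) : ℂ).re,
         (inner ℂ x (Matrix.toEuclideanLin A x) : ℂ).im,
         ‖Matrix.toEuclideanLin A x‖ ^ 2) = fN A x := by
  simp only [hmap, fN, hx, one_mul]
  rw [Real.sqrt_sq (norm_nonneg _), Complex.re_add_im]

theorem stmt10 {n : ℕ} (A : Matrix (Fin n) (Fin n) ℂ) :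
    FN A = hmap '' (DW A ∩ {v : ℝ × ℝ × ℝ | 0 < v.2.2}) := by
  ext z
  constructor
  · rintro ⟨x, hAx, rfl⟩
    have hx0 : x ≠ 0 := by
      rintro rfl; simp at hAx
    have hxn : (0 : ℝ) < ‖x‖ := norm_pos_iff.mpr hx0
    set y : EuclideanSpace ℂ (Fin n) := ((‖x‖⁻¹ : ℝ) : ℂ) • x with hy
    have hyn : ‖y‖ = 1 := by
      simp [hy, norm_smul, abs_of_pos (inv_pos.mpr hxn), inv_mul_cancel₀ hxn.ne']
    have hLy : Matrix.toEuclideanLin A y = ((‖x‖⁻¹ : ℝ) : ℂ) • Matrix.toEuclideanLin A x :=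
      map_smul _ _ _
    have hLy0 : Matrix.toEuclideanLin A y ≠ 0 := by
      rw [hLy]
      simp [smul_eq_zero, hAx, hxn.ne']
    refine ⟨((inner ℂ y (Matrix.toEuclideanLin A y) : ℂ).re,
         (inner ℂ y (Matrix.toEuclideanLin A y) : ℂ).im,
         ‖Matrix.toEuclideanLin A y‖ ^ 2), ⟨⟨y, hyn, rfl⟩, ?_⟩, ?_⟩
    · exact pow_pos (norm_pos_iff.mpr hLy0) 2
    · rw [fN_eq_hmap A y hyn, hy, fN_smul A x _ (inv_pos.mpr hxn)]
  · rintro ⟨v, ⟨⟨x, hx, rfl⟩, hpos⟩, rfl⟩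
    have hLx0 : Matrix.toEuclideanLin A x ≠ 0 := by
      intro h
      simp [h] at hpos
    exact ⟨x, hLx0, fN_eq_hmap A x hx⟩
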